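/- Let A = (a_{ij}) be an n×n matrix over a field K with all diagonal entries a_{ii} ≠ 0, let D = diag(a_{11}, …, a_{nn}), and set B = I + D^{−1} − D^{−1}A (so that B has diagonal entries a_{ii}^{−1} and off-diagonal entries B_{ij} = −a_{ii}^{−1}a_{ij}). Let π = π_1π_2⋯π_n be a permutation of {1, …, n} and let π^{[r]} = π_n π_{n−1}⋯π_1 denote its reversal. Then the linear SDS map F_{π_n}(A)·F_{π_{n−1}}(A)⋯F_{π_1}(A) is invertible, and its inverse equals the linear SDS map with local matrix B and update schedule π^{[r]}, namely (F_{π_n}(A)⋯F_{π_1}(A))^{−1} = F_{π_1}(B)·F_{π_2}(B)⋯F_{π_n}(B). -/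

import Mathlib

open Matrix

/-- `sdsF M i` is the matrix that agrees with the identity matrix in every row except
row `i`, whose `i`-th row equals the `i`-th row of `M`. -/
def sdsF {K : Type*} [Field K] {n : ℕ} (M : Matrix (Fin n) (Fin n) K) (i : Fin n) :
    Matrix (Fin n) (Fin n) K :=
  Matrix.of fun k j => if k = i then M k j else if k = j then 1 else 0

/-- The map of the linear SDS with local matrix `M` and permutation update schedule `σ`
(`σ k` being the `k`-th index updated, zero-indexed): the product
`F_{σ_n}(M) · F_{σ_{n-1}}(M) ⋯ F_{σ_1}(M)`. -/
def sdsMap {K : Type*} [Field K] {n : ℕ} (M : Matrix (Fin n) (Fin n) K)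
    (σ : Equiv.Perm (Fin n)) : Matrix (Fin n) (Fin n) K :=
  (((List.finRange n).reverse).map fun k => sdsF M (σ k)).prod


lemma sdsF_mul_sdsF {K : Type*} [Field K] {n : ℕ}
    (A : Matrix (Fin n) (Fin n) K) (i : Fin n) (hAi : A i i ≠ 0) :
    sdsF (1 + Matrix.diagonal (fun j => (A j j)⁻¹)
            - Matrix.diagonal (fun j => (A j j)⁻¹) * A) i * sdsF A i = 1 := by
  ext k j
  simp only [Matrix.mul_apply, sdsF, Matrix.of_apply, Matrix.sub_apply, Matrix.add_apply,
    Matrix.one_apply, Matrix.diagonal_apply, Matrix.diagonal_mul]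
  by_cases hk : k = i
  · subst hk
    simp only [if_pos rfl]
    by_cases hj : j = k
    · subst hj
      rw [Finset.sum_eq_single j]
      · simp [hAi]
      · intro b _ hb
        simp [hb, Ne.symm hb]
      · simp
    · rw [Finset.sum_eq_add_of_mem k j (Finset.mem_univ k) (Finset.mem_univ j)
        (Ne.symm hj) ?_]
      · simp only [if_pos rfl, if_neg (Ne.symm hj), if_neg hj]
        simp [hAi]
      · intro b _ hb
        simp [hb.1, hb.2, Ne.symm hb.2]
  · simp only [if_neg hk]
    rw [Finset.sum_eq_single k]
    · by_cases hkj : k = j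
      · subst hkj
        simp [hk]
      · simp [hkj, hk]
    · intro b _ hb; simp [Ne.symm hb]
    · simp

lemma prod_map_cancel {α : Type*} {M : Type*} [Monoid M] (l : List α) (f g : α → M)
    (h : ∀ x, g x * f x = 1) : (l.map g).prod * ((l.map f).reverse).prod = 1 := by
  induction l with
  | nil => simp
  | cons a l ih =>
    simp only [List.map_cons, List.prod_cons, List.reverse_cons, List.prod_append,
      List.prod_cons, List.prod_nil, mul_one]
    calc g a * (l.map g).prod * ((l.map f).reverse.prod * f a)
        = g a * ((l.map g).prod * (l.map f).reverse.prod) * f a := by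
          rw [mul_assoc, mul_assoc, mul_assoc]
      _ = 1 := by rw [ih, mul_one, h]

/-- **Inverse of an invertible linear SDS (Proposition on invertibility).**
Let `A` have nonzero diagonal entries, `D = Diag A`, and `B = I + D⁻¹ − D⁻¹ A`
(so `B i i = (A i i)⁻¹` and `B i j = −(A i i)⁻¹ · A i j` for `i ≠ j`).
Then the linear SDS map of `(A, π)` is invertible and its inverse is the linear SDS map
with local matrix `B` and the reversed update schedule `π^{[r]} = π_n π_{n-1} ⋯ π_1`,
i.e. `(F_{π_n}(A) ⋯ F_{π_1}(A))⁻¹ = F_{π_1}(B) · F_{π_2}(B) ⋯ F_{π_n}(B)`. -/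
theorem sdsMap_inverse {K : Type*} [Field K] {n : ℕ} (hn : 0 < n)
    (A : Matrix (Fin n) (Fin n) K) (hA : ∀ i : Fin n, A i i ≠ 0)
    (π : Equiv.Perm (Fin n)) :
    IsUnit (sdsMap A π) ∧
      (sdsMap A π)⁻¹ =
        sdsMap
          (1 + Matrix.diagonal (fun i => (A i i)⁻¹)
            - Matrix.diagonal (fun i => (A i i)⁻¹) * A)
          (Fin.revPerm.trans π) := by
  set B := 1 + Matrix.diagonal (fun i => (A i i)⁻¹)
            - Matrix.diagonal (fun i => (A i i)⁻¹) * A with hB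
  have key : sdsMap B (Fin.revPerm.trans π) * sdsMap A π = 1 := by
    have h1 : sdsMap A π = (((List.finRange n).map fun k => sdsF A (π k)).reverse).prod := by
      rw [sdsMap, List.map_reverse]
    have h2 : sdsMap B (Fin.revPerm.trans π)
        = (((List.finRange n).map fun k => sdsF B (π k))).prod := by
      rw [sdsMap, List.finRange_reverse, List.map_map]
      congr 1
      apply List.map_congr_left
      intro a _
      simp [Fin.rev_rev]
    rw [h1, h2]
    exact prod_map_cancel _ _ _ fun k => sdsF_mul_sdsF A (π k) (hA _)
  exact ⟨(Matrix.isUnit_iff_isUnit_det _).mpr (Matrix.isUnit_det_of_left_inverse key), Matrix.inv_eq_left_inv key⟩
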